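/- arXiv:1505.04304 — 4 statements merged into one kernel-verified Lean document; each statement's English description precedes it below -/
import Mathlib

section
/- Let A = ↓a and B = ↓b be summand-ideals of the pseudo MV-algebra M = Γ(G,u), where a and b are Boolean elements. Then ⟨A ∪ B⟩_n = ↓(a ⊕ b) and A ∩ B = ↓(a ⊙ b), and both are summand-ideals of M; moreover the map a ↦ ↓a is a bijection from the set of Boolean elements of M onto the set of summand-ideals of M satisfying a ≤ b if and only if ↓a ⊆ ↓b. -/
variable {G : Type*} [Lattice G] [AddGroup G]
  [CovariantClass G G (· + ·) (· ≤ ·)]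
  [CovariantClass G G (Function.swap (· + ·)) (· ≤ ·)]

/-- `u` is a strong unit of the lattice-ordered group `G`. -/
def IsStrongUnit (u : G) : Prop := 0 ≤ u ∧ ∀ x : G, ∃ n : ℕ, x ≤ n • u

/-- The operation `x ⊕ y := (x + y) ⊓ u` of the pseudo MV-algebra `Γ(G,u)`. -/
def oplus (u x y : G) : G := (x + y) ⊓ u

/-- The operation `x ⊙ y := (x - u + y) ⊔ 0` of the pseudo MV-algebra `Γ(G,u)`. -/
def odot (u x y : G) : G := (x - u + y) ⊔ 0

/-- `n.x := x ⊕ ⋯ ⊕ x` (`n` summands), with `0.x = 0`. -/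
def nOplus (u : G) : ℕ → G → G
  | 0, _ => 0
  | n + 1, x => oplus u (nOplus u n x) x

/-- `I` is an ideal of the pseudo MV-algebra with carrier `C ⊆ Γ(G,u)`:
a nonempty subset of `C`, downward closed within `C`, and closed under `⊕`. -/
def IsIdealIn (u : G) (C I : Set G) : Prop :=
  I ⊆ C ∧ I.Nonempty ∧ (∀ x ∈ I, ∀ y ∈ C, y ≤ x → y ∈ I) ∧
    ∀ x ∈ I, ∀ y ∈ I, oplus u x y ∈ I

/-- `I` is a normal ideal: `x ⊕ I = I ⊕ x` for all `x ∈ C`. -/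
def IsNormalIdealIn (u : G) (C I : Set G) : Prop :=
  IsIdealIn u C I ∧ ∀ x ∈ C, (fun i => oplus u x i) '' I = (fun i => oplus u i x) '' I

/-- `⟨X⟩_n`, the smallest normal ideal (of the carrier `C`) containing `X`. -/
def normalGenIn (u : G) (C X : Set G) : Set G :=
  ⋂₀ {I | IsNormalIdealIn u C I ∧ X ⊆ I}

/-- The polar `X^⊥ = {y ∈ C : y ∧ x = 0 for all x ∈ X}` computed in carrier `C`. -/
def polarIn (C X : Set G) : Set G := {y ∈ C | ∀ x ∈ X, y ⊓ x = 0}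

/-- `A ⊕ B := {a ⊕ b : a ∈ A, b ∈ B}`. -/
def setOplus (u : G) (A B : Set G) : Set G := Set.image2 (oplus u) A B

/-- `↓a` computed within the carrier `C`. -/
def dsetIn (C : Set G) (a : G) : Set G := {x ∈ C | x ≤ a}

/-- `I` is a summand-ideal of the carrier `C`: a normal ideal such that for
some normal ideal `J`, `I ∩ J = {0}` and `⟨I ∪ J⟩_n = C`. -/
def IsSummandIdealIn (u : G) (C I : Set G) : Prop :=
  IsNormalIdealIn u C I ∧ ∃ J, IsNormalIdealIn u C J ∧ I ∩ J = {0} ∧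
    normalGenIn u C (I ∪ J) = C

/-- `I` is a polar ideal of the carrier `C`: `I = I^⊥⊥`. -/
def IsPolarIdealIn (C I : Set G) : Prop := polarIn C (polarIn C I) = I

/-- `a` is a Boolean element of the carrier `C`: `a ∈ C` and `a ⊕ a = a`. -/
def IsBooleanIn (u : G) (C : Set G) (a : G) : Prop := a ∈ C ∧ oplus u a a = a

/-- The carrier `C` is strongly projectable: every polar ideal is a summand-ideal. -/
def IsStronglyProjectableIn (u : G) (C : Set G) : Prop :=
  ∀ I : Set G, IsPolarIdealIn C I → IsSummandIdealIn u C I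

/-- `N` is a subalgebra of `Γ(G,u)`: contains `0` and `u`, closed under `⊕`,
`x⁻ = u - x` and `x∼ = -x + u`. -/
def IsSubalg (u : G) (N : Set G) : Prop :=
  N ⊆ Set.Icc 0 u ∧ 0 ∈ N ∧ u ∈ N ∧
    (∀ x ∈ N, ∀ y ∈ N, oplus u x y ∈ N) ∧
    (∀ x ∈ N, u - x ∈ N) ∧ (∀ x ∈ N, -x + u ∈ N)

/-- `N` is a large subalgebra of `Γ(G,u)`: for every nonzero `y ∈ Γ(G,u)` there
are `n ∈ ℕ` and a nonzero `x ∈ N` with `x ≤ n.y`. -/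
def IsLargeSubalg (u : G) (N : Set G) : Prop :=
  IsSubalg u N ∧ ∀ y ∈ Set.Icc (0 : G) u, y ≠ 0 →
    ∃ n : ℕ, ∃ x ∈ N, x ≠ 0 ∧ x ≤ nOplus u n y

-- ## auxiliary lemmas

lemma zzH1 (u x y : G) (hx : 0 ≤ x) : (x + (y ⊓ u)) ⊓ u = (x + y) ⊓ u := by
  rw [add_inf, inf_assoc, inf_eq_right.mpr (le_add_of_nonneg_left hx)]

lemma zzH2 (u x y : G) (hy : 0 ≤ y) : ((x ⊓ u) + y) ⊓ u = (x + y) ⊓ u := by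
  rw [inf_add, inf_assoc, inf_eq_right.mpr (le_add_of_nonneg_right hy)]

lemma zzdisj {x y : G} (hx : 0 ≤ x) (hy : 0 ≤ y) (h : x ⊓ y = 0) :
    x + y = x ⊔ y ∧ y + x = x ⊔ y := by
  have hsle : x ⊔ y ≤ x + y := sup_le (le_add_of_nonneg_right hy) (le_add_of_nonneg_left hx)
  have hsle' : x ⊔ y ≤ y + x := sup_le (le_add_of_nonneg_left hy) (le_add_of_nonneg_right hx)
  have hx1 : (x - y) ⊔ 0 = x := by
    have : x + -(x ⊓ y) = x := by rw [h, neg_zero, add_zero]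
    rw [neg_inf, add_sup, add_neg_cancel, ← sub_eq_add_neg, sup_comm] at this
    exact this
  have hx2 : (-y + x) ⊔ 0 = x := by
    have : -(x ⊓ y) + x = x := by rw [h, neg_zero, zero_add]
    rw [neg_inf, sup_add, neg_add_cancel, sup_comm] at this
    exact this
  constructor
  · refine le_antisymm (le_sub_iff_add_le.mp ?_) hsle
    rw [show x ⊔ y - y = (x - y) ⊔ 0 by rw [sub_eq_add_neg, sup_add, add_neg_cancel,
      ← sub_eq_add_neg], hx1]
  · refine le_antisymm (le_neg_add_iff_add_le.mp ?_) hsle'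
    rw [show -y + (x ⊔ y) = (-y + x) ⊔ 0 by rw [add_sup, neg_add_cancel], hx2]

lemma zzbool0 {u e : G} (he : IsBooleanIn u (Set.Icc (0 : G) u) e) : 0 ≤ e := he.1.1
lemma zzbool1 {u e : G} (he : IsBooleanIn u (Set.Icc (0 : G) u) e) : e ≤ u := he.1.2

lemma zzbool_inf1 {u e : G} (he : IsBooleanIn u (Set.Icc (0 : G) u) e) :
    e ⊓ (-e + u) = 0 := by
  have h2 : e + (e ⊓ (-e + u)) = e + 0 := by
    rw [add_zero, add_inf, add_neg_cancel_left]; exact he.2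
  exact add_left_cancel h2

lemma zzbool_inf2 {u e : G} (he : IsBooleanIn u (Set.Icc (0 : G) u) e) :
    e ⊓ (u - e) = 0 := by
  have h2 : (e ⊓ (u - e)) + e = 0 + e := by
    rw [zero_add, inf_add, sub_add_cancel]; exact he.2
  exact add_right_cancel h2

lemma zzbool_commu {u e : G} (he : IsBooleanIn u (Set.Icc (0 : G) u) e) :
    e + u = u + e := by
  have hd := zzdisj (zzbool0 he) (sub_nonneg.mpr (zzbool1 he)) (zzbool_inf2 he)
  have h3 : e + (u - e) = u := by rw [hd.1, ← hd.2, sub_add_cancel]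
  have h4 : e + u = (e + (u - e)) + e := by
    rw [sub_eq_add_neg, add_assoc, add_assoc, neg_add_cancel, add_zero]
  rw [h4, h3]

lemma zzbool_negu {u e : G} (he : IsBooleanIn u (Set.Icc (0 : G) u) e) :
    -e + u = u - e := by
  rw [eq_sub_iff_add_eq, add_assoc, ← zzbool_commu he, neg_add_cancel_left]

lemma zzbool_oplus_left {u e x : G} (he : IsBooleanIn u (Set.Icc (0 : G) u) e)
    (hx : x ∈ Set.Icc (0 : G) u) : oplus u e x = e ⊔ x := by
  obtain ⟨hx0, hxu⟩ := hx
  have hc0 : 0 ≤ x ⊓ (-e + u) := le_inf hx0 (by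
    rw [zzbool_negu he]; exact sub_nonneg.mpr (zzbool1 he))
  have hce : e ⊓ (x ⊓ (-e + u)) = 0 := by
    refine le_antisymm ?_ (le_inf (zzbool0 he) hc0)
    calc e ⊓ (x ⊓ (-e + u)) ≤ e ⊓ (-e + u) := inf_le_inf_left e inf_le_right
    _ = 0 := zzbool_inf1 he
  have hd := zzdisj (zzbool0 he) hc0 hce
  have h1 : oplus u e x = e + (x ⊓ (-e + u)) := by
    show (e + x) ⊓ u = _
    rw [add_inf, add_neg_cancel_left]
  refine le_antisymm ?_ (le_inf (sup_le (le_add_of_nonneg_right hx0)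
    (le_add_of_nonneg_left (zzbool0 he))) (sup_le (zzbool1 he) hxu))
  rw [h1, hd.1]
  exact sup_le (le_sup_left) (le_trans inf_le_left le_sup_right)

lemma zzbool_oplus_right {u e x : G} (he : IsBooleanIn u (Set.Icc (0 : G) u) e)
    (hx : x ∈ Set.Icc (0 : G) u) : oplus u x e = e ⊔ x := by
  obtain ⟨hx0, hxu⟩ := hx
  have hc0 : 0 ≤ x ⊓ (u - e) := le_inf hx0 (sub_nonneg.mpr (zzbool1 he))
  have hce : (x ⊓ (u - e)) ⊓ e = 0 := by
    refine le_antisymm ?_ (le_inf hc0 (zzbool0 he))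
    calc (x ⊓ (u - e)) ⊓ e ≤ (u - e) ⊓ e := inf_le_inf_right e inf_le_right
    _ = e ⊓ (u - e) := inf_comm _ _
    _ = 0 := zzbool_inf2 he
  have hd := zzdisj hc0 (zzbool0 he) hce
  have h1 : oplus u x e = (x ⊓ (u - e)) + e := by
    show (x + e) ⊓ u = _
    rw [inf_add, sub_add_cancel]
  refine le_antisymm ?_ (le_inf (sup_le (le_add_of_nonneg_left hx0)
    (le_add_of_nonneg_right (zzbool0 he))) (sup_le (zzbool1 he) hxu))
  rw [h1, hd.1]
  exact sup_le (le_trans inf_le_left le_sup_right) le_sup_left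

lemma zzodot {u a b : G} (ha : IsBooleanIn u (Set.Icc (0 : G) u) a)
    (hb : b ∈ Set.Icc (0 : G) u) : odot u a b = a ⊓ b := by
  obtain ⟨hb0, hbu⟩ := hb
  refine le_antisymm (sup_le (le_inf ?_ ?_) (le_inf (zzbool0 ha) hb0)) ?_
  · -- a - u + b ≤ a
    have h : -u + b ≤ 0 := by
      have := add_le_add_right hbu (-u); rwa [neg_add_cancel] at this
    calc a - u + b = a + (-u + b) := by rw [sub_eq_add_neg, add_assoc]
    _ ≤ a + 0 := add_le_add_right h a
    _ = a := add_zero a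
  · -- a - u + b ≤ b
    calc a - u + b ≤ 0 + b := add_le_add_left (sub_nonpos.mpr (zzbool1 ha)) b
    _ = b := zero_add b
  · -- a ⊓ b ≤ odot u a b
    have he0 : 0 ≤ u - a := sub_nonneg.mpr (zzbool1 ha)
    have hab0 : 0 ≤ a ⊓ b := le_inf (zzbool0 ha) hb0
    have hdisj : (u - a) ⊓ (a ⊓ b) = 0 := by
      refine le_antisymm ?_ (le_inf he0 hab0)
      calc (u - a) ⊓ (a ⊓ b) ≤ (u - a) ⊓ a := inf_le_inf_left _ inf_le_left
      _ = a ⊓ (u - a) := inf_comm _ _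
      _ = 0 := zzbool_inf2 ha
    have hd := zzdisj he0 hab0 hdisj
    have key : (u - a) + (a ⊓ b) ≤ b ⊔ (u - a) := by
      rw [hd.1]
      exact sup_le le_sup_right (le_trans inf_le_right le_sup_left)
    show a ⊓ b ≤ (a - u + b) ⊔ 0
    have : a - u + b = -(u - a) + b := by rw [neg_sub]
    rw [this, show (-(u - a) + b) ⊔ 0 = -(u - a) + (b ⊔ (u - a)) by
      rw [add_sup, neg_add_cancel]]
    exact le_neg_add_iff_add_le.mpr key

lemma zzassoc {u : G} (x y z : G) (hx : 0 ≤ x) (hz : 0 ≤ z) :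
    oplus u (oplus u x y) z = oplus u x (oplus u y z) := by
  show ((x + y) ⊓ u + z) ⊓ u = (x + (y + z) ⊓ u) ⊓ u
  rw [zzH2 u (x + y) z hz, zzH1 u x (y + z) hx, add_assoc]

lemma zzoplus_mem {u x y : G} (hx : x ∈ Set.Icc (0 : G) u) (hy : y ∈ Set.Icc (0 : G) u) :
    oplus u x y ∈ Set.Icc (0 : G) u :=
  ⟨le_inf (add_nonneg hx.1 hy.1) (le_trans hx.1 hx.2), inf_le_right⟩

lemma zzbool_sup {u e f : G} (he : IsBooleanIn u (Set.Icc (0 : G) u) e)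
    (hf : IsBooleanIn u (Set.Icc (0 : G) u) f) :
    IsBooleanIn u (Set.Icc (0 : G) u) (e ⊔ f) := by
  have he0 := zzbool0 he
  have hf0 := zzbool0 hf
  have hef : oplus u e f = e ⊔ f := zzbool_oplus_left he hf.1
  have hfe : oplus u f e = e ⊔ f := zzbool_oplus_right he hf.1
  have hfe' : oplus u f e = oplus u e f := hfe.trans hef.symm
  have hof0 : 0 ≤ oplus u f e := (zzoplus_mem hf.1 he.1).1
  have key : oplus u (oplus u e f) (oplus u e f) = oplus u e f := by
    nth_rewrite 2 [← hfe']
    rw [zzassoc e f (oplus u f e) he0 hof0, ← zzassoc f f e hf0 he0, hf.2, hfe', ← zzassoc e e f he0 hf0, he.2]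
  refine ⟨⟨le_trans he0 le_sup_left, sup_le (zzbool1 he) (zzbool1 hf)⟩, ?_⟩
  rw [← hef]; exact key

lemma zzbool_inf {u e f : G} (he : IsBooleanIn u (Set.Icc (0 : G) u) e)
    (hf : IsBooleanIn u (Set.Icc (0 : G) u) f) :
    IsBooleanIn u (Set.Icc (0 : G) u) (e ⊓ f) := by
  have hs0 : 0 ≤ e ⊓ f := le_inf (zzbool0 he) (zzbool0 hf)
  have hsu : e ⊓ f ≤ u := le_trans inf_le_left (zzbool1 he)
  refine ⟨⟨hs0, hsu⟩, le_antisymm (le_inf ?_ ?_) (le_inf (le_add_of_nonneg_left hs0) hsu)⟩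
  · calc (e ⊓ f + (e ⊓ f)) ⊓ u ≤ (e + e) ⊓ u :=
      inf_le_inf_right u (add_le_add inf_le_left inf_le_left)
    _ = e := he.2
  · calc (e ⊓ f + (e ⊓ f)) ⊓ u ≤ (f + f) ⊓ u :=
      inf_le_inf_right u (add_le_add inf_le_right inf_le_right)
    _ = f := hf.2

lemma zzbool_compl {u e : G} (he : IsBooleanIn u (Set.Icc (0 : G) u) e) :
    IsBooleanIn u (Set.Icc (0 : G) u) (u - e) := by
  refine ⟨⟨sub_nonneg.mpr (zzbool1 he), sub_le_self u (zzbool0 he)⟩, ?_⟩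
  show ((u - e) + (u - e)) ⊓ u = u - e
  have h1 : ((u - e) + (u - e)) ⊓ u = (u - e) + ((u - e) ⊓ (-(u - e) + u)) := by
    rw [add_inf, add_neg_cancel_left]
  rw [h1, neg_sub, sub_add_cancel, inf_comm (u - e) e, zzbool_inf2 he, add_zero]

lemma zzideal_dset {u e : G} (he : IsBooleanIn u (Set.Icc (0 : G) u) e) :
    IsIdealIn u (Set.Icc (0 : G) u) (dsetIn (Set.Icc (0 : G) u) e) := by
  refine ⟨fun x hx => hx.1, ⟨0, ⟨⟨le_rfl, le_trans (zzbool0 he) (zzbool1 he)⟩, zzbool0 he⟩⟩,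
    fun x hx y hyC hyx => ⟨hyC, le_trans hyx hx.2⟩, fun x hx y hy => ?_⟩
  refine ⟨zzoplus_mem hx.1 hy.1, ?_⟩
  calc (x + y) ⊓ u ≤ (e + e) ⊓ u := inf_le_inf_right u (add_le_add hx.2 hy.2)
  _ = e := he.2

lemma zznormal_dset {u e : G} (he : IsBooleanIn u (Set.Icc (0 : G) u) e) :
    IsNormalIdealIn u (Set.Icc (0 : G) u) (dsetIn (Set.Icc (0 : G) u) e) := by
  refine ⟨zzideal_dset he, fun x hx => ?_⟩
  obtain ⟨hx0, hxu⟩ := hx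
  apply Set.Subset.antisymm
  · rintro _ ⟨i, ⟨⟨hi0, hiu⟩, hie⟩, rfl⟩
    set j := ((x + i) ⊓ u - x) ⊔ 0 with hjdef
    have hj0 : 0 ≤ j := le_sup_right
    have hje : j ≤ e := by
      have h1 : (x + i) ⊓ u ≤ e ⊔ x := by
        have h2 : (x + i) ⊓ u ≤ (x + e) ⊓ u := inf_le_inf_right u (add_le_add_right hie x)
        rwa [show (x + e) ⊓ u = e ⊔ x from zzbool_oplus_right he ⟨hx0, hxu⟩] at h2
      calc j ≤ ((e ⊔ x) - x) ⊔ 0 := sup_le_sup_right (sub_le_sub_right h1 x) 0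
      _ = ((e - x) ⊔ 0) ⊔ 0 := by
        rw [sub_eq_add_neg, sup_add, add_neg_cancel, ← sub_eq_add_neg]
      _ ≤ e := sup_le (sup_le (sub_le_self e hx0) (zzbool0 he)) (zzbool0 he)
    have hoeq : oplus u j x = oplus u x i := by
      show (j + x) ⊓ u = (x + i) ⊓ u
      have hxle : x ≤ (x + i) ⊓ u := le_inf (le_add_of_nonneg_right hi0) hxu
      have hjx : j + x = (x + i) ⊓ u := by
        rw [hjdef, sup_add, zero_add, sub_eq_add_neg, add_assoc, neg_add_cancel, add_zero,
          sup_eq_left.mpr hxle]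
      rw [hjx, inf_eq_left.mpr inf_le_right]
    exact ⟨j, ⟨⟨hj0, le_trans hje (zzbool1 he)⟩, hje⟩, hoeq⟩
  · rintro _ ⟨i, ⟨⟨hi0, hiu⟩, hie⟩, rfl⟩
    set j := (-x + (i + x) ⊓ u) ⊔ 0 with hjdef
    have hj0 : 0 ≤ j := le_sup_right
    have hje : j ≤ e := by
      have h1 : (i + x) ⊓ u ≤ e ⊔ x := by
        have h2 : (i + x) ⊓ u ≤ (e + x) ⊓ u := inf_le_inf_right u (add_le_add_left hie x)
        rwa [show (e + x) ⊓ u = e ⊔ x from zzbool_oplus_left he ⟨hx0, hxu⟩] at h2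
      calc j ≤ (-x + (e ⊔ x)) ⊔ 0 := sup_le_sup_right (add_le_add_right h1 (-x)) 0
      _ = ((-x + e) ⊔ 0) ⊔ 0 := by rw [add_sup, neg_add_cancel]
      _ ≤ e := by
        have : -x + e ≤ e := by
          calc -x + e ≤ 0 + e := add_le_add_left (neg_nonpos.mpr hx0) e
          _ = e := zero_add e
        exact sup_le (sup_le this (zzbool0 he)) (zzbool0 he)
    have hoeq : oplus u x j = oplus u i x := by
      show (x + j) ⊓ u = (i + x) ⊓ u
      have hxle : x ≤ (i + x) ⊓ u := le_inf (le_add_of_nonneg_left hi0) hxu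
      have hjx : x + j = (i + x) ⊓ u := by
        rw [hjdef, add_sup, add_zero, add_neg_cancel_left, sup_eq_left.mpr hxle]
      rw [hjx, inf_eq_left.mpr inf_le_right]
    exact ⟨j, ⟨⟨hj0, le_trans hje (zzbool1 he)⟩, hje⟩, hoeq⟩

lemma zzgen {u e f : G} (he : IsBooleanIn u (Set.Icc (0 : G) u) e)
    (hf : IsBooleanIn u (Set.Icc (0 : G) u) f) :
    normalGenIn u (Set.Icc (0 : G) u)
      (dsetIn (Set.Icc (0 : G) u) e ∪ dsetIn (Set.Icc (0 : G) u) f)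
      = dsetIn (Set.Icc (0 : G) u) (e ⊔ f) := by
  apply Set.Subset.antisymm
  · apply Set.sInter_subset_of_mem
    refine ⟨zznormal_dset (zzbool_sup he hf), Set.union_subset ?_ ?_⟩
    · exact fun x hx => ⟨hx.1, le_trans hx.2 le_sup_left⟩
    · exact fun x hx => ⟨hx.1, le_trans hx.2 le_sup_right⟩
  · intro z hz
    rw [normalGenIn, Set.mem_sInter]
    rintro K ⟨hKnorm, hKsub⟩
    have heK : e ∈ K := hKsub (Or.inl ⟨he.1, le_rfl⟩)
    have hfK : f ∈ K := hKsub (Or.inr ⟨hf.1, le_rfl⟩)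
    have hefK : oplus u e f ∈ K := hKnorm.1.2.2.2 e heK f hfK
    rw [zzbool_oplus_left he hf.1] at hefK
    exact hKnorm.1.2.2.1 _ hefK z hz.1 hz.2

lemma zzsummand_dset {u e : G} (he : IsBooleanIn u (Set.Icc (0 : G) u) e) :
    IsSummandIdealIn u (Set.Icc (0 : G) u) (dsetIn (Set.Icc (0 : G) u) e) := by
  have hu0 : (0 : G) ≤ u := le_trans (zzbool0 he) (zzbool1 he)
  refine ⟨zznormal_dset he, dsetIn (Set.Icc (0 : G) u) (u - e),
    zznormal_dset (zzbool_compl he), ?_, ?_⟩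
  · apply Set.Subset.antisymm
    · rintro z ⟨⟨hzC, hze⟩, ⟨-, hze'⟩⟩
      have : z ≤ 0 := by
        calc z ≤ e ⊓ (u - e) := le_inf hze hze'
        _ = 0 := zzbool_inf2 he
      exact le_antisymm this hzC.1
    · rintro z hz
      rw [Set.mem_singleton_iff] at hz
      subst hz
      exact ⟨⟨⟨le_rfl, hu0⟩, zzbool0 he⟩, ⟨⟨le_rfl, hu0⟩, sub_nonneg.mpr (zzbool1 he)⟩⟩
  · rw [zzgen he (zzbool_compl he)]
    have hd := zzdisj (zzbool0 he) (sub_nonneg.mpr (zzbool1 he)) (zzbool_inf2 he)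
    have hsup : e ⊔ (u - e) = u := by rw [← hd.2, sub_add_cancel]
    rw [hsup]
    exact Set.ext fun z => ⟨fun h => h.1, fun h => ⟨h, h.2⟩⟩

lemma zzzero_mem {u : G} (hu0 : (0 : G) ≤ u) {I : Set G}
    (hI : IsIdealIn u (Set.Icc (0 : G) u) I) : 0 ∈ I := by
  obtain ⟨w, hw⟩ := hI.2.1
  exact hI.2.2.1 w hw 0 ⟨le_rfl, hu0⟩ (hI.1 hw).1

lemma zzswapL {u : G} {I : Set G} (hI : IsNormalIdealIn u (Set.Icc (0 : G) u) I)
    {x i : G} (hx : x ∈ Set.Icc (0 : G) u) (hi : i ∈ I) :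
    ∃ i' ∈ I, (i' + x) ⊓ u = (x + i) ⊓ u := by
  have h := hI.2 x hx
  have hmem : oplus u x i ∈ (fun i => oplus u i x) '' I := by
    rw [← h]; exact ⟨i, hi, rfl⟩
  obtain ⟨i', hi', heq⟩ := hmem
  exact ⟨i', hi', heq⟩

lemma zzswapR {u : G} {I : Set G} (hI : IsNormalIdealIn u (Set.Icc (0 : G) u) I)
    {x i : G} (hx : x ∈ Set.Icc (0 : G) u) (hi : i ∈ I) :
    ∃ i' ∈ I, (x + i') ⊓ u = (i + x) ⊓ u := by
  have h := hI.2 x hx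
  have hmem : oplus u i x ∈ (fun i => oplus u x i) '' I := by
    rw [h]; exact ⟨i, hi, rfl⟩
  obtain ⟨i', hi', heq⟩ := hmem
  exact ⟨i', hi', heq⟩

lemma zzsetOplus_normal {u : G} (hu0 : (0 : G) ≤ u) {I J : Set G}
    (hI : IsNormalIdealIn u (Set.Icc (0 : G) u) I)
    (hJ : IsNormalIdealIn u (Set.Icc (0 : G) u) J) :
    IsNormalIdealIn u (Set.Icc (0 : G) u) (setOplus u I J) ∧
      I ∪ J ⊆ setOplus u I J := by
  have hIC : I ⊆ Set.Icc (0 : G) u := hI.1.1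
  have hJC : J ⊆ Set.Icc (0 : G) u := hJ.1.1
  have h0I : (0 : G) ∈ I := zzzero_mem hu0 hI.1
  have h0J : (0 : G) ∈ J := zzzero_mem hu0 hJ.1
  have hsub : I ∪ J ⊆ setOplus u I J := by
    rintro z (hz | hz)
    · exact ⟨z, hz, 0, h0J, by show (z + 0) ⊓ u = z; rw [add_zero, inf_eq_left.mpr (hIC hz).2]⟩
    · exact ⟨0, h0I, z, hz, by show (0 + z) ⊓ u = z; rw [zero_add, inf_eq_left.mpr (hJC hz).2]⟩
  refine ⟨⟨⟨?_, ⟨0, hsub (Or.inl h0I)⟩, ?_, ?_⟩, ?_⟩, hsub⟩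
  · rintro _ ⟨i, hi, j, hj, rfl⟩
    exact zzoplus_mem (hIC hi) (hJC hj)
  · -- downward closed
    rintro _ ⟨i, hi, j, hj, rfl⟩ z hzC hz
    obtain ⟨hz0, hzu⟩ := hzC
    have hi0 := (hIC hi).1
    have hj0 := (hJC hj).1
    have hi1 : z ⊓ i ∈ I := hI.1.2.2.1 i hi (z ⊓ i) ⟨le_inf hz0 hi0, le_trans inf_le_left hzu⟩
      inf_le_right
    have hj1mem : -(z ⊓ i) + z ∈ J := by
      have hform : -(z ⊓ i) + z = 0 ⊔ (-i + z) := by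
        rw [neg_inf, sup_add, neg_add_cancel]
      have h0 : 0 ≤ -(z ⊓ i) + z := by rw [hform]; exact le_sup_left
      have hlej : -(z ⊓ i) + z ≤ j := by
        rw [hform]
        refine sup_le hj0 (neg_add_le_iff_le_add.mpr ?_)
        exact le_trans hz inf_le_left
      exact hJ.1.2.2.1 j hj _ ⟨h0, le_trans hlej (hJC hj).2⟩ hlej
    refine ⟨z ⊓ i, hi1, -(z ⊓ i) + z, hj1mem, ?_⟩
    show (z ⊓ i + (-(z ⊓ i) + z)) ⊓ u = z
    rw [add_neg_cancel_left, inf_eq_left.mpr hzu]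
  · -- closed under oplus
    rintro _ ⟨i, hi, j, hj, rfl⟩ _ ⟨i', hi', j', hj', rfl⟩
    have hi0 := (hIC hi).1
    have hj0 := (hJC hj).1
    have hi'0 := (hIC hi').1
    have hj'0 := (hJC hj').1
    obtain ⟨i₂, hi₂, hsw⟩ := zzswapL hI (hJC hj) hi'
    have hi₂0 := (hIC hi₂).1
    have key : oplus u (oplus u i j) (oplus u i' j') =
        oplus u (oplus u i i₂) (oplus u j j') := by
      show ((i + j) ⊓ u + ((i' + j') ⊓ u)) ⊓ u = ((i + i₂) ⊓ u + ((j + j') ⊓ u)) ⊓ u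
      calc ((i + j) ⊓ u + ((i' + j') ⊓ u)) ⊓ u
          = ((i + j) + ((i' + j') ⊓ u)) ⊓ u :=
            zzH2 u (i + j) _ (le_inf (add_nonneg hi'0 hj'0) hu0)
        _ = ((i + j) + (i' + j')) ⊓ u := zzH1 u (i + j) (i' + j') (add_nonneg hi0 hj0)
        _ = (i + ((j + i') + j')) ⊓ u := by rw [add_assoc, ← add_assoc j i' j']
        _ = (i + (((j + i') + j') ⊓ u)) ⊓ u := (zzH1 u i _ hi0).symm
        _ = (i + ((((j + i') ⊓ u) + j') ⊓ u)) ⊓ u := by rw [zzH2 u (j + i') j' hj'0]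
        _ = (i + ((((i₂ + j) ⊓ u) + j') ⊓ u)) ⊓ u := by rw [hsw]
        _ = (i + (((i₂ + j) + j') ⊓ u)) ⊓ u := by rw [zzH2 u (i₂ + j) j' hj'0]
        _ = (i + ((i₂ + (j + j')) ⊓ u)) ⊓ u := by rw [add_assoc]
        _ = (i + ((i₂ + ((j + j') ⊓ u)) ⊓ u)) ⊓ u := by rw [zzH1 u i₂ (j + j') hi₂0]
        _ = (i + (i₂ + ((j + j') ⊓ u))) ⊓ u := zzH1 u i _ hi0
        _ = ((i + i₂) + ((j + j') ⊓ u)) ⊓ u := by rw [← add_assoc]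
        _ = ((i + i₂) ⊓ u + ((j + j') ⊓ u)) ⊓ u :=
            (zzH2 u (i + i₂) _ (le_inf (add_nonneg hj0 hj'0) hu0)).symm
    exact ⟨oplus u i i₂, hI.1.2.2.2 i hi i₂ hi₂, oplus u j j',
      hJ.1.2.2.2 j hj j' hj', key.symm⟩
  · -- normality
    intro x hx
    obtain ⟨hx0, hxu⟩ := hx
    apply Set.Subset.antisymm
    · rintro _ ⟨_, ⟨i, hi, j, hj, rfl⟩, rfl⟩
      have hi0 := (hIC hi).1
      have hj0 := (hJC hj).1
      obtain ⟨i₂, hi₂, hsw1⟩ := zzswapL hI ⟨hx0, hxu⟩ hi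
      obtain ⟨j₂, hj₂, hsw2⟩ := zzswapL hJ ⟨hx0, hxu⟩ hj
      have hi₂0 := (hIC hi₂).1
      have hj₂0 := (hJC hj₂).1
      have key : oplus u x (oplus u i j) = oplus u (oplus u i₂ j₂) x := by
        show (x + ((i + j) ⊓ u)) ⊓ u = ((i₂ + j₂) ⊓ u + x) ⊓ u
        calc (x + ((i + j) ⊓ u)) ⊓ u
            = (x + (i + j)) ⊓ u := zzH1 u x (i + j) hx0
          _ = ((x + i) + j) ⊓ u := by rw [← add_assoc]
          _ = (((x + i) ⊓ u) + j) ⊓ u := (zzH2 u (x + i) j hj0).symm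
          _ = (((i₂ + x) ⊓ u) + j) ⊓ u := by rw [hsw1]
          _ = ((i₂ + x) + j) ⊓ u := zzH2 u (i₂ + x) j hj0
          _ = (i₂ + (x + j)) ⊓ u := by rw [add_assoc]
          _ = (i₂ + ((x + j) ⊓ u)) ⊓ u := (zzH1 u i₂ (x + j) hi₂0).symm
          _ = (i₂ + ((j₂ + x) ⊓ u)) ⊓ u := by rw [hsw2]
          _ = (i₂ + (j₂ + x)) ⊓ u := zzH1 u i₂ (j₂ + x) hi₂0
          _ = ((i₂ + j₂) + x) ⊓ u := by rw [← add_assoc]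
          _ = ((i₂ + j₂) ⊓ u + x) ⊓ u := (zzH2 u (i₂ + j₂) x hx0).symm
      exact ⟨oplus u i₂ j₂, ⟨i₂, hi₂, j₂, hj₂, rfl⟩, key.symm⟩
    · rintro _ ⟨_, ⟨i, hi, j, hj, rfl⟩, rfl⟩
      have hi0 := (hIC hi).1
      have hj0 := (hJC hj).1
      obtain ⟨j₂, hj₂, hsw2⟩ := zzswapR hJ ⟨hx0, hxu⟩ hj
      have hj₂0 := (hJC hj₂).1
      obtain ⟨i₂, hi₂, hsw1⟩ := zzswapR hI ⟨hx0, hxu⟩ hi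
      have hi₂0 := (hIC hi₂).1
      have key : oplus u (oplus u i j) x = oplus u x (oplus u i₂ j₂) := by
        show ((i + j) ⊓ u + x) ⊓ u = (x + ((i₂ + j₂) ⊓ u)) ⊓ u
        calc ((i + j) ⊓ u + x) ⊓ u
            = ((i + j) + x) ⊓ u := zzH2 u (i + j) x hx0
          _ = (i + (j + x)) ⊓ u := by rw [add_assoc]
          _ = (i + ((j + x) ⊓ u)) ⊓ u := (zzH1 u i (j + x) hi0).symm
          _ = (i + ((x + j₂) ⊓ u)) ⊓ u := by rw [hsw2]
          _ = (i + (x + j₂)) ⊓ u := zzH1 u i (x + j₂) hi0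
          _ = ((i + x) + j₂) ⊓ u := by rw [← add_assoc]
          _ = (((i + x) ⊓ u) + j₂) ⊓ u := (zzH2 u (i + x) j₂ hj₂0).symm
          _ = (((x + i₂) ⊓ u) + j₂) ⊓ u := by rw [hsw1]
          _ = ((x + i₂) + j₂) ⊓ u := zzH2 u (x + i₂) j₂ hj₂0
          _ = (x + (i₂ + j₂)) ⊓ u := by rw [add_assoc]
          _ = (x + ((i₂ + j₂) ⊓ u)) ⊓ u := (zzH1 u x (i₂ + j₂) hx0).symm
      exact ⟨oplus u i₂ j₂, ⟨i₂, hi₂, j₂, hj₂, rfl⟩, key.symm⟩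

lemma zzsurj {u : G} (hu0 : (0 : G) ≤ u) {I : Set G}
    (hI : IsSummandIdealIn u (Set.Icc (0 : G) u) I) :
    ∃ c, IsBooleanIn u (Set.Icc (0 : G) u) c ∧ dsetIn (Set.Icc (0 : G) u) c = I := by
  obtain ⟨hInorm, J, hJnorm, hIJ, hgen⟩ := hI
  obtain ⟨hKnorm, hKsub⟩ := zzsetOplus_normal hu0 hInorm hJnorm
  have hCK : Set.Icc (0 : G) u ⊆ setOplus u I J := by
    rw [← hgen]
    exact Set.sInter_subset_of_mem ⟨hKnorm, hKsub⟩
  have huK : u ∈ setOplus u I J := hCK ⟨hu0, le_rfl⟩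
  obtain ⟨i, hiI, j, hjJ, hij⟩ := huK
  -- hij : oplus u i j = u, i.e. (i + j) ⊓ u = u
  have hiC := hInorm.1.1 hiI
  have hjC := hJnorm.1.1 hjJ
  obtain ⟨hi0, hiu⟩ := hiC
  obtain ⟨hj0, hju⟩ := hjC
  have hij0 : i ⊓ j = 0 := by
    have hmemI : i ⊓ j ∈ I :=
      hInorm.1.2.2.1 i hiI (i ⊓ j) ⟨le_inf hi0 hj0, le_trans inf_le_left hiu⟩ inf_le_left
    have hmemJ : i ⊓ j ∈ J :=
      hJnorm.1.2.2.1 j hjJ (i ⊓ j) ⟨le_inf hi0 hj0, le_trans inf_le_left hiu⟩ inf_le_right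
    have : i ⊓ j ∈ I ∩ J := ⟨hmemI, hmemJ⟩
    rwa [hIJ, Set.mem_singleton_iff] at this
  have hd := zzdisj hi0 hj0 hij0
  have hsum : i + j = u := by
    refine le_antisymm ?_ ?_
    · rw [hd.1]; exact sup_le hiu hju
    · have : (i + j) ⊓ u = u := hij
      rw [← this]; exact inf_le_left
  have hbool : IsBooleanIn u (Set.Icc (0 : G) u) i := by
    refine ⟨⟨hi0, hiu⟩, ?_⟩
    show (i + i) ⊓ u = i
    have hju' : -i + u = j := by rw [← hsum, neg_add_cancel_left]
    rw [show (i + i) ⊓ u = i + (i ⊓ (-i + u)) by rw [add_inf, add_neg_cancel_left],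
      hju', hij0, add_zero]
  refine ⟨i, hbool, Set.Subset.antisymm ?_ ?_⟩
  · intro x hx
    exact hInorm.1.2.2.1 i hiI x hx.1 hx.2
  · intro x hxI
    have hxC := hInorm.1.1 hxI
    have hxj0 : x ⊓ j = 0 := by
      have hmemI : x ⊓ j ∈ I := hInorm.1.2.2.1 x hxI (x ⊓ j)
        ⟨le_inf hxC.1 hj0, le_trans inf_le_left hxC.2⟩ inf_le_left
      have hmemJ : x ⊓ j ∈ J := hJnorm.1.2.2.1 j hjJ (x ⊓ j)
        ⟨le_inf hxC.1 hj0, le_trans inf_le_left hxC.2⟩ inf_le_right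
      have : x ⊓ j ∈ I ∩ J := ⟨hmemI, hmemJ⟩
      rwa [hIJ, Set.mem_singleton_iff] at this
    have hxd := zzdisj hxC.1 hj0 hxj0
    have hxle : x + j ≤ u := by rw [hxd.1]; exact sup_le hxC.2 hju
    have hxi : x ≤ i := by
      have h1 : x ≤ u - j := le_sub_iff_add_le.mpr hxle
      rwa [show u - j = i from (eq_sub_iff_add_eq.mpr hsum).symm] at h1
    exact ⟨hxC, hxi⟩

theorem stmt10 (u : G) (hu : IsStrongUnit u) (a b : G)
    (ha : IsBooleanIn u (Set.Icc (0 : G) u) a) (hb : IsBooleanIn u (Set.Icc (0 : G) u) b)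
    (hA : IsSummandIdealIn u (Set.Icc (0 : G) u) (dsetIn (Set.Icc (0 : G) u) a))
    (hB : IsSummandIdealIn u (Set.Icc (0 : G) u) (dsetIn (Set.Icc (0 : G) u) b)) :
    normalGenIn u (Set.Icc (0 : G) u) (dsetIn (Set.Icc (0 : G) u) a ∪ dsetIn (Set.Icc (0 : G) u) b)
        = dsetIn (Set.Icc (0 : G) u) (oplus u a b) ∧
      dsetIn (Set.Icc (0 : G) u) a ∩ dsetIn (Set.Icc (0 : G) u) b = dsetIn (Set.Icc (0 : G) u) (odot u a b) ∧
      IsSummandIdealIn u (Set.Icc (0 : G) u)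
        (normalGenIn u (Set.Icc (0 : G) u) (dsetIn (Set.Icc (0 : G) u) a ∪ dsetIn (Set.Icc (0 : G) u) b)) ∧
      IsSummandIdealIn u (Set.Icc (0 : G) u) (dsetIn (Set.Icc (0 : G) u) a ∩ dsetIn (Set.Icc (0 : G) u) b) ∧
      Set.BijOn (dsetIn (Set.Icc (0 : G) u)) {c : G | IsBooleanIn u (Set.Icc (0 : G) u) c}
        {I : Set G | IsSummandIdealIn u (Set.Icc (0 : G) u) I} ∧
      (∀ c d : G, IsBooleanIn u (Set.Icc (0 : G) u) c → IsBooleanIn u (Set.Icc (0 : G) u) d →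
        (c ≤ d ↔ dsetIn (Set.Icc (0 : G) u) c ⊆ dsetIn (Set.Icc (0 : G) u) d)) := by

  have hu0 : (0 : G) ≤ u := hu.1
  have hoab : oplus u a b = a ⊔ b := zzbool_oplus_left ha hb.1
  have h1 : normalGenIn u (Set.Icc (0 : G) u)
      (dsetIn (Set.Icc (0 : G) u) a ∪ dsetIn (Set.Icc (0 : G) u) b)
      = dsetIn (Set.Icc (0 : G) u) (oplus u a b) := by
    rw [hoab]; exact zzgen ha hb
  have h2 : dsetIn (Set.Icc (0 : G) u) a ∩ dsetIn (Set.Icc (0 : G) u) b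
      = dsetIn (Set.Icc (0 : G) u) (odot u a b) := by
    rw [zzodot ha hb.1]
    exact Set.ext fun x => ⟨fun h => ⟨h.1.1, le_inf h.1.2 h.2.2⟩,
      fun h => ⟨⟨h.1, le_trans h.2 inf_le_left⟩, ⟨h.1, le_trans h.2 inf_le_right⟩⟩⟩
  refine ⟨h1, h2, ?_, ?_, ⟨?_, ?_, ?_⟩, ?_⟩
  · rw [h1, hoab]
    exact zzsummand_dset (zzbool_sup ha hb)
  · rw [h2, zzodot ha hb.1]
    exact zzsummand_dset (zzbool_inf ha hb)
  · intro c hc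
    exact zzsummand_dset hc
  · intro c hc d hd h
    have hcd : c ∈ dsetIn (Set.Icc (0 : G) u) d :=
      h ▸ (⟨hc.1, le_rfl⟩ : c ∈ dsetIn (Set.Icc (0 : G) u) c)
    have hdc : d ∈ dsetIn (Set.Icc (0 : G) u) c :=
      h.symm ▸ (⟨hd.1, le_rfl⟩ : d ∈ dsetIn (Set.Icc (0 : G) u) d)
    exact le_antisymm hcd.2 hdc.2
  · intro I hI
    obtain ⟨c, hcB, hcd⟩ := zzsurj hu0 hI
    exact ⟨c, hcB, hcd⟩
  · intro c d hc hd
    constructor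
    · intro h x hx
      exact ⟨hx.1, le_trans hx.2 h⟩
    · intro h
      exact (h ⟨hc.1, le_rfl⟩).2
end

section
/- If the pseudo MV-algebra M = Γ(G,u) is strongly projectable, then M is a pseudocomplemented lattice: for every a ∈ M there exists a Boolean element b ∈ M such that, for all x ∈ M, x ∧ a = 0 if and only if x ≤ b. -/
variable {G : Type*} [Lattice G] [AddGroup G]
  [CovariantClass G G (· + ·) (· ≤ ·)]
  [CovariantClass G G (Function.swap (· + ·)) (· ≤ ·)]

lemma oplus_mono' {u x x' y y' : G} (h1 : x ≤ x') (h2 : y ≤ y') :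
    oplus u x y ≤ oplus u x' y' :=
  inf_le_inf (add_le_add h1 h2) le_rfl

lemma oplus_nonneg' {u x y : G} (hx : 0 ≤ x) (hy : 0 ≤ y) (hu : 0 ≤ u) :
    0 ≤ oplus u x y :=
  le_inf (add_nonneg hx hy) hu

lemma oplus_assoc' {u x y z : G} (hx : 0 ≤ x) (hz : 0 ≤ z) :
    oplus u (oplus u x y) z = oplus u x (oplus u y z) := by
  unfold oplus
  rw [inf_add, add_inf, ← add_assoc, inf_assoc, inf_assoc]
  congr 1
  rw [inf_eq_right.mpr (le_add_of_nonneg_right hz),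
    inf_eq_right.mpr (le_add_of_nonneg_left hx)]

lemma inf_add_le_add' {a b c : G} (ha : 0 ≤ a) (hb : 0 ≤ b) (hc : 0 ≤ c) :
    a ⊓ (b + c) ≤ (a ⊓ b) + (a ⊓ c) := by
  rw [add_inf, inf_add, inf_add]
  refine le_inf (le_inf ?_ ?_) (le_inf ?_ ?_)
  · exact le_trans inf_le_left (le_add_of_nonneg_right ha)
  · exact le_trans inf_le_left (le_add_of_nonneg_left hb)
  · exact le_trans inf_le_left (le_add_of_nonneg_right hc)
  · exact inf_le_right

lemma polar_of_singleton_isPolar {C : Set G} {a : G} (ha : a ∈ C) :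
    IsPolarIdealIn C (polarIn C {a}) := by
  apply Set.Subset.antisymm
  · intro y hy
    obtain ⟨hyC, hy2⟩ := hy
    refine ⟨hyC, ?_⟩
    intro x hx
    rw [Set.mem_singleton_iff] at hx
    subst hx
    refine hy2 x ⟨ha, ?_⟩
    intro z hz
    rw [inf_comm]
    exact hz.2 x rfl
  · intro y hy
    refine ⟨hy.1, ?_⟩
    intro x hx
    rw [inf_comm]
    exact hx.2 y hy

theorem stmt11 (u : G) (hu : IsStrongUnit u)
    (h : IsStronglyProjectableIn u (Set.Icc (0 : G) u)) :
    ∀ a ∈ Set.Icc (0 : G) u, ∃ b : G, IsBooleanIn u (Set.Icc (0 : G) u) b ∧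
      ∀ x ∈ Set.Icc (0 : G) u, (x ⊓ a = 0 ↔ x ≤ b) := by
  intro a ha
  have hu0 : (0 : G) ≤ u := hu.1
  set C : Set G := Set.Icc (0 : G) u with hCdef
  set I : Set G := polarIn C {a} with hIdef
  obtain ⟨hInorm, J, hJnorm, hIJ, hgen⟩ := h I (polar_of_singleton_isPolar ha)
  obtain ⟨⟨hIC, hIne, hIdc, hIop⟩, hInml⟩ := hInorm
  obtain ⟨⟨hJC, hJne, hJdc, hJop⟩, hJnml⟩ := hJnorm
  have h0C : (0 : G) ∈ C := ⟨le_refl 0, hu0⟩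
  have h0I : (0 : G) ∈ I := by
    obtain ⟨z, hz⟩ := hIne
    exact hIdc z hz 0 h0C (hIC hz).1
  have h0J : (0 : G) ∈ J := by
    obtain ⟨z, hz⟩ := hJne
    exact hJdc z hz 0 h0C (hJC hz).1
  -- swap lemmas from normality
  have swap : ∀ L : Set G,
      (∀ x ∈ C, (fun i => oplus u x i) '' L = (fun i => oplus u i x) '' L) →
      ∀ x ∈ C, ∀ i ∈ L,
        (∃ i' ∈ L, oplus u i' x = oplus u x i) ∧
        (∃ i' ∈ L, oplus u x i' = oplus u i x) := by
    intro L hL x hx i hi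
    constructor
    · have : oplus u x i ∈ (fun i => oplus u i x) '' L := by
        rw [← hL x hx]; exact ⟨i, hi, rfl⟩
      obtain ⟨i', hi', he⟩ := this
      exact ⟨i', hi', he⟩
    · have : oplus u i x ∈ (fun i => oplus u x i) '' L := by
        rw [hL x hx]; exact ⟨i, hi, rfl⟩
      obtain ⟨i', hi', he⟩ := this
      exact ⟨i', hi', he⟩
  -- the candidate normal ideal
  set K : Set G := {x | x ∈ C ∧ ∃ p ∈ I, ∃ q ∈ J, x ≤ oplus u p q} with hKdef
  have hKideal : IsIdealIn u C K := by
    refine ⟨fun x hx => hx.1, ⟨0, h0C, 0, h0I, 0, h0J, le_inf (by simp) hu0⟩, ?_, ?_⟩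
    · rintro x ⟨hxC, p, hp, q, hq, hxle⟩ y hyC hyx
      exact ⟨hyC, p, hp, q, hq, le_trans hyx hxle⟩
    · rintro x ⟨hxC, p₁, hp₁, q₁, hq₁, hxle⟩ y ⟨hyC, p₂, hp₂, q₂, hq₂, hyle⟩
      have hq₁C := hJC hq₁
      obtain ⟨⟨p₃, hp₃, hswp⟩, -⟩ := swap I hInml q₁ hq₁C p₂ hp₂
      have hp₁0 := (hIC hp₁).1
      have hp₃0 := (hIC hp₃).1
      have hq₁0 := hq₁C.1
      have hq₂0 := (hJC hq₂).1
      have e1 : oplus u (oplus u p₁ q₁) (oplus u p₂ q₂)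
          = oplus u (oplus u p₁ p₃) (oplus u q₁ q₂) := by
        rw [oplus_assoc' hp₁0 (oplus_nonneg' (hIC hp₂).1 hq₂0 hu0),
          ← oplus_assoc' hq₁0 hq₂0, ← hswp, oplus_assoc' hp₃0 hq₂0,
          ← oplus_assoc' hp₁0 (oplus_nonneg' hq₁0 hq₂0 hu0)]
      refine ⟨⟨oplus_nonneg' hxC.1 hyC.1 hu0, inf_le_right⟩,
        oplus u p₁ p₃, hIop p₁ hp₁ p₃ hp₃, oplus u q₁ q₂, hJop q₁ hq₁ q₂ hq₂, ?_⟩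
      exact le_trans (oplus_mono' hxle hyle) (le_of_eq e1)
  have hKnml : ∀ x ∈ C, (fun i => oplus u x i) '' K = (fun i => oplus u i x) '' K := by
    intro x hxC
    obtain ⟨hx0, hxu⟩ := hxC
    apply Set.Subset.antisymm
    · rintro t ⟨k, ⟨hkC, p, hp, q, hq, hkle⟩, rfl⟩
      have hk0 := hkC.1
      have hp0 := (hIC hp).1
      have hq0 := (hJC hq).1
      set k' : G := oplus u x k - x with hk'def
      have hxk_le_u : oplus u x k ≤ u := inf_le_right
      have hx_le : x ≤ oplus u x k := le_inf (le_add_of_nonneg_right hk0) hxu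
      have hk'C : k' ∈ C := by
        constructor
        · exact sub_nonneg.mpr hx_le
        · exact sub_le_iff_le_add.mpr (le_trans hxk_le_u (le_add_of_nonneg_right hx0))
      obtain ⟨⟨p', hp', hpe⟩, -⟩ := swap I hInml x ⟨hx0, hxu⟩ p hp
      obtain ⟨⟨q', hq', hqe⟩, -⟩ := swap J hJnml x ⟨hx0, hxu⟩ q hq
      have hp'0 := (hIC hp').1
      have hq'0 := (hJC hq').1
      have e2 : oplus u x (oplus u p q) = oplus u (oplus u p' q') x := by
        rw [← oplus_assoc' hx0 hq0, ← hpe, oplus_assoc' hp'0 hq0, ← hqe,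
          ← oplus_assoc' hp'0 hx0]
      have hbound : k' ≤ oplus u p' q' := by
        have h1 : k' ≤ oplus u x (oplus u p q) - x :=
          sub_le_sub_right (oplus_mono' le_rfl hkle) x
        rw [e2] at h1
        calc k' ≤ oplus u (oplus u p' q') x - x := h1
          _ ≤ (oplus u p' q' + x) - x := sub_le_sub_right inf_le_left x
          _ = oplus u p' q' := add_sub_cancel_right _ _
      have hk'x : oplus u k' x = oplus u x k := by
        show (oplus u x k - x + x) ⊓ u = oplus u x k
        rw [sub_add_cancel]
        exact inf_eq_left.mpr hxk_le_u
      exact ⟨k', ⟨hk'C, p', hp', q', hq', hbound⟩, hk'x⟩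
    · rintro t ⟨k, ⟨hkC, p, hp, q, hq, hkle⟩, rfl⟩
      have hk0 := hkC.1
      have hp0 := (hIC hp).1
      have hq0 := (hJC hq).1
      set k'' : G := -x + oplus u k x with hk''def
      have hkx_le_u : oplus u k x ≤ u := inf_le_right
      have hx_le : x ≤ oplus u k x := le_inf (le_add_of_nonneg_left hk0) hxu
      have hk''C : k'' ∈ C := by
        constructor
        · have h1 := add_le_add_right hx_le (-x)
          rwa [neg_add_cancel] at h1
        · have h2 : oplus u k x ≤ x + u :=
            le_trans hkx_le_u (le_add_of_nonneg_left hx0)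
          have h3 := add_le_add_right h2 (-x)
          rwa [neg_add_cancel_left] at h3
      obtain ⟨-, ⟨p'', hp'', hpe⟩⟩ := swap I hInml x ⟨hx0, hxu⟩ p hp
      obtain ⟨-, ⟨q'', hq'', hqe⟩⟩ := swap J hJnml x ⟨hx0, hxu⟩ q hq
      have hp''0 := (hIC hp'').1
      have hq''0 := (hJC hq'').1
      have e3 : oplus u (oplus u p q) x = oplus u x (oplus u p'' q'') := by
        rw [oplus_assoc' hp0 hx0, ← hqe, ← oplus_assoc' hp0 hq''0, ← hpe,
          oplus_assoc' hx0 hq''0]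
      have hbound : k'' ≤ oplus u p'' q'' := by
        have h1 : oplus u k x ≤ oplus u x (oplus u p'' q'') := by
          rw [← e3]; exact oplus_mono' hkle le_rfl
        have h2 : oplus u k x ≤ x + oplus u p'' q'' := le_trans h1 inf_le_left
        have h3 := add_le_add_right h2 (-x)
        rwa [neg_add_cancel_left] at h3
      have hxk'' : oplus u x k'' = oplus u k x := by
        show (x + (-x + oplus u k x)) ⊓ u = oplus u k x
        rw [add_neg_cancel_left]
        exact inf_eq_left.mpr hkx_le_u
      exact ⟨k'', ⟨hk''C, p'', hp'', q'', hq'', hbound⟩, hxk''⟩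
  have hKnormal : IsNormalIdealIn u C K := ⟨hKideal, hKnml⟩
  have hsubIJ : I ∪ J ⊆ K := by
    rintro z (hz | hz)
    · exact ⟨hIC hz, z, hz, 0, h0J, le_inf (le_of_eq (add_zero z).symm) (hIC hz).2⟩
    · exact ⟨hJC hz, 0, h0I, z, hz, le_inf (le_of_eq (zero_add z).symm) (hJC hz).2⟩
  have hCK : C ⊆ K := by
    have h1 : normalGenIn u C (I ∪ J) ⊆ K :=
      Set.sInter_subset_of_mem ⟨hKnormal, hsubIJ⟩
    rwa [hgen] at h1
  obtain ⟨-, p, hp, q, hq, hule⟩ := hCK ⟨hu0, le_refl u⟩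
  have hupq : u ≤ p + q := le_trans hule inf_le_left
  have hq0 := (hJC hq).1
  have hqu := (hJC hq).2
  set b : G := u - q with hbdef
  have hb0 : 0 ≤ b := sub_nonneg.mpr hqu
  have hbu : b ≤ u := by
    rw [hbdef, sub_eq_add_neg]
    exact le_trans (add_le_add_right (neg_nonpos.mpr hq0) u) (le_of_eq (add_zero u))
  have hbC : b ∈ C := ⟨hb0, hbu⟩
  have hbI : b ∈ I := hIdc p hp b hbC (sub_le_iff_le_add.mpr hupq)
  have hbqC : b ⊓ q ∈ C := ⟨le_inf hb0 hq0, le_trans inf_le_left hbu⟩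
  have hbq0 : b ⊓ q = 0 := by
    have h3 : b ⊓ q ∈ I ∩ J :=
      ⟨hIdc b hbI _ hbqC inf_le_left, hJdc q hq _ hbqC inf_le_right⟩
    rw [hIJ] at h3
    exact h3
  have hbq : b + q = u := sub_add_cancel u q
  have hbBool : oplus u b b = b := by
    show (b + b) ⊓ u = b
    rw [← hbq, ← add_inf, hbq0, add_zero]
  refine ⟨b, ⟨hbC, hbBool⟩, ?_⟩
  intro x hx
  constructor
  · intro hxa
    have hxI : x ∈ I := by
      refine ⟨hx, ?_⟩
      intro z hz
      rw [Set.mem_singleton_iff] at hz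
      rw [hz]
      exact hxa
    have hxqC : x ⊓ q ∈ C := ⟨le_inf hx.1 hq0, le_trans inf_le_left hx.2⟩
    have hxq : x ⊓ q = 0 := by
      have h3 : x ⊓ q ∈ I ∩ J :=
        ⟨hIdc x hxI _ hxqC inf_le_left, hJdc q hq _ hxqC inf_le_right⟩
      rw [hIJ] at h3
      exact h3
    calc x = x ⊓ u := (inf_eq_left.mpr hx.2).symm
      _ = x ⊓ (b + q) := by rw [hbq]
      _ ≤ (x ⊓ b) + (x ⊓ q) := inf_add_le_add' hx.1 hb0 hq0
      _ = x ⊓ b := by rw [hxq, add_zero]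
      _ ≤ b := inf_le_right
  · intro hxb
    refine le_antisymm ?_ (le_inf hx.1 ha.1)
    calc x ⊓ a ≤ b ⊓ a := inf_le_inf_right a hxb
      _ = 0 := hbI.2 a rfl
end

section
/- Let N be a large subalgebra of the pseudo MV-algebra M = Γ(G,u) (so M is an essential extension of N). Then the maps Φ : ρ(M) → ρ(N) defined by Φ(I) = I ∩ N, and Ψ : ρ(N) → ρ(M) defined by Ψ(J) = (J^{⊥_N})^{⊥_M}, are mutually inverse, inclusion-preserving bijections between the set ρ(M) of polar ideals of M and the set ρ(N) of polar ideals of N. -/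
variable {G : Type*} [Lattice G] [AddGroup G]
  [CovariantClass G G (· + ·) (· ≤ ·)]
  [CovariantClass G G (Function.swap (· + ·)) (· ≤ ·)]

lemma polarIn_subset' (C X : Set G) : polarIn C X ⊆ C := fun _ h => h.1

lemma polarIn_anti' (C : Set G) {X Y : Set G} (h : X ⊆ Y) :
    polarIn C Y ⊆ polarIn C X := fun z hz => ⟨hz.1, fun x hx => hz.2 x (h hx)⟩

lemma subset_biPolarIn' {C X : Set G} (h : X ⊆ C) :
    X ⊆ polarIn C (polarIn C X) := fun x hx =>
  ⟨h hx, fun y hy => by rw [inf_comm]; exact hy.2 x hx⟩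

lemma triple_polarIn' {C X : Set G} (h : X ⊆ C) :
    polarIn C (polarIn C (polarIn C X)) = polarIn C X :=
  Set.Subset.antisymm (polarIn_anti' C (subset_biPolarIn' h))
    (subset_biPolarIn' (polarIn_subset' C X))

lemma polarIn_inter' {C N : Set G} (h : N ⊆ C) (X : Set G) :
    polarIn N X = polarIn C X ∩ N := by
  ext y
  constructor
  · rintro ⟨h1, h2⟩; exact ⟨⟨h h1, h2⟩, h1⟩
  · rintro ⟨⟨_, h2⟩, h1⟩; exact ⟨h1, h2⟩

lemma add_inf_right' (a c b : G) : (a ⊓ c) + b = (a + b) ⊓ (c + b) := by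
  apply le_antisymm
  · exact le_inf (add_le_add inf_le_left (le_refl b)) (add_le_add inf_le_right (le_refl b))
  · rw [← sub_le_iff_le_add]
    exact le_inf (sub_le_iff_le_add.mpr inf_le_left) (sub_le_iff_le_add.mpr inf_le_right)

lemma disj_nsmul' {a b : G} (ha : 0 ≤ a) (hb : 0 ≤ b) (h : a ⊓ b = 0) :
    ∀ n : ℕ, a ⊓ n • b = 0
  | 0 => by rw [zero_nsmul]; exact inf_eq_right.mpr ha
  | n + 1 => by
    refine le_antisymm ?_ (le_inf ha (nsmul_nonneg hb (n + 1)))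
    have h1 : a ⊓ (n + 1) • b ≤ b := by
      calc a ⊓ (n + 1) • b ≤ (a + b) ⊓ (n • b + b) := by
            rw [succ_nsmul]
            exact inf_le_inf (le_add_of_nonneg_right hb) le_rfl
        _ = (a ⊓ n • b) + b := (add_inf_right' a (n • b) b).symm
        _ = b := by rw [disj_nsmul' ha hb h n, zero_add]
    calc a ⊓ (n + 1) • b ≤ a ⊓ b := le_inf inf_le_left h1
      _ = 0 := h

lemma nsmul_mono' {a b : G} (h : a ≤ b) : ∀ n : ℕ, n • a ≤ n • b
  | 0 => by simp
  | n + 1 => by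
    rw [succ_nsmul, succ_nsmul]
    exact add_le_add (nsmul_mono' h n) h

lemma nOplus_le_nsmul' (u y : G) : ∀ n : ℕ, nOplus u n y ≤ n • y
  | 0 => by simp [nOplus]
  | n + 1 => by
    rw [succ_nsmul]
    simp only [nOplus, oplus]
    exact le_trans inf_le_left (add_le_add (nOplus_le_nsmul' u y n) (le_refl y))

lemma star_polar' {u : G} {N : Set G} (hN : IsLargeSubalg u N) {B : Set G}
    (hB : B ⊆ Set.Icc (0 : G) u) :
    polarIn (Set.Icc (0 : G) u) (polarIn (Set.Icc (0 : G) u) B ∩ N) =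
      polarIn (Set.Icc (0 : G) u) (polarIn (Set.Icc (0 : G) u) B) := by
  apply Set.Subset.antisymm _ (polarIn_anti' _ Set.inter_subset_left)
  rintro z ⟨hzM, hz⟩
  refine ⟨hzM, fun a ha => ?_⟩
  by_contra hw
  have hw0 : (0 : G) ≤ z ⊓ a := le_inf hzM.1 ha.1.1
  have hwu : z ⊓ a ≤ u := le_trans inf_le_left hzM.2
  obtain ⟨n, x, hxN, hx0, hxle⟩ := hN.2 (z ⊓ a) ⟨hw0, hwu⟩ hw
  have hxsm : x ≤ n • (z ⊓ a) := le_trans hxle (nOplus_le_nsmul' u (z ⊓ a) n)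
  have hxM : x ∈ Set.Icc (0 : G) u := hN.1.1 hxN
  have hxBperp : x ∈ polarIn (Set.Icc (0 : G) u) B := by
    refine ⟨hxM, fun b hb => ?_⟩
    have hab : a ⊓ b = 0 := ha.2 b hb
    have hban : b ⊓ n • a = 0 :=
      disj_nsmul' (hB hb).1 ha.1.1 (by rw [inf_comm]; exact hab) n
    refine le_antisymm ?_ (le_inf hxM.1 (hB hb).1)
    calc x ⊓ b ≤ (n • a) ⊓ b :=
          inf_le_inf (le_trans hxsm (nsmul_mono' inf_le_right n)) le_rfl
      _ = 0 := by rw [inf_comm]; exact hban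
  have hzx : z ⊓ x = 0 := hz x ⟨hxBperp, hxN⟩
  have hxnz : x ⊓ n • z = 0 :=
    disj_nsmul' hxM.1 hzM.1 (by rw [inf_comm]; exact hzx) n
  have hxz : x ≤ n • z := le_trans hxsm (nsmul_mono' inf_le_left n)
  exact hx0 (by rw [← hxnz, inf_eq_left.mpr hxz])

theorem stmt15 (u : G) (hu : IsStrongUnit u) (N : Set G)
    (hN : IsLargeSubalg u N) :
    (∀ I : Set G, IsPolarIdealIn (Set.Icc (0 : G) u) I → IsPolarIdealIn N (I ∩ N)) ∧
      (∀ J : Set G, IsPolarIdealIn N J →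
        IsPolarIdealIn (Set.Icc (0 : G) u) (polarIn (Set.Icc (0 : G) u) (polarIn N J))) ∧
      (∀ I : Set G, IsPolarIdealIn (Set.Icc (0 : G) u) I →
        polarIn (Set.Icc (0 : G) u) (polarIn N (I ∩ N)) = I) ∧
      (∀ J : Set G, IsPolarIdealIn N J →
        polarIn (Set.Icc (0 : G) u) (polarIn N J) ∩ N = J) ∧
      (∀ I I' : Set G, IsPolarIdealIn (Set.Icc (0 : G) u) I → IsPolarIdealIn (Set.Icc (0 : G) u) I' →
        (I ⊆ I' ↔ I ∩ N ⊆ I' ∩ N)) ∧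
      (∀ J J' : Set G, IsPolarIdealIn N J → IsPolarIdealIn N J' →
        (J ⊆ J' ↔ polarIn (Set.Icc (0 : G) u) (polarIn N J) ⊆ polarIn (Set.Icc (0 : G) u) (polarIn N J'))) :=  by
  have hNM : N ⊆ Set.Icc (0 : G) u := hN.1.1
  -- For a polar ideal I of M, polarIn M (I ∩ N) = polarIn M I
  have h1 : ∀ I : Set G, IsPolarIdealIn (Set.Icc (0 : G) u) I →
      polarIn (Set.Icc (0 : G) u) (I ∩ N) = polarIn (Set.Icc (0 : G) u) I := by
    intro I hI
    have hIM : I ⊆ Set.Icc (0 : G) u := hI ▸ polarIn_subset' _ _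
    conv_lhs => rw [← hI]
    rw [star_polar' hN (polarIn_subset' _ _), triple_polarIn' hIM]
  have key3 : ∀ I : Set G, IsPolarIdealIn (Set.Icc (0 : G) u) I →
      polarIn (Set.Icc (0 : G) u) (polarIn N (I ∩ N)) = I := by
    intro I hI
    have hIM : I ⊆ Set.Icc (0 : G) u := hI ▸ polarIn_subset' _ _
    rw [polarIn_inter' hNM, h1 I hI, star_polar' hN hIM, hI]
  have key4 : ∀ J : Set G, IsPolarIdealIn N J →
      polarIn (Set.Icc (0 : G) u) (polarIn N J) ∩ N = J := by
    intro J hJ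
    have hJN : J ⊆ N := hJ ▸ polarIn_subset' _ _
    have hJM : J ⊆ Set.Icc (0 : G) u := hJN.trans hNM
    calc polarIn (Set.Icc (0 : G) u) (polarIn N J) ∩ N
        = polarIn (Set.Icc (0 : G) u) (polarIn (Set.Icc (0 : G) u) J ∩ N) ∩ N := by
          rw [polarIn_inter' hNM]
      _ = polarIn (Set.Icc (0 : G) u) (polarIn (Set.Icc (0 : G) u) J) ∩ N := by
          rw [star_polar' hN hJM]
      _ = polarIn (Set.Icc (0 : G) u) (polarIn (Set.Icc (0 : G) u) J ∩ N) ∩ N := by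
          rw [star_polar' hN hJM]
      _ = polarIn N (polarIn (Set.Icc (0 : G) u) J ∩ N) := (polarIn_inter' hNM _).symm
      _ = polarIn N (polarIn N J) := by rw [polarIn_inter' hNM J]
      _ = J := hJ
  refine ⟨?_, ?_, key3, key4, ?_, ?_⟩
  · intro I hI
    have hIM : I ⊆ Set.Icc (0 : G) u := hI ▸ polarIn_subset' _ _
    show polarIn N (polarIn N (I ∩ N)) = I ∩ N
    rw [polarIn_inter' hNM (I ∩ N), h1 I hI, polarIn_inter' hNM,
      star_polar' hN hIM, hI]
  · intro J hJ
    have hJM : polarIn N J ⊆ Set.Icc (0 : G) u := (polarIn_subset' N J).trans hNM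
    exact triple_polarIn' hJM
  · intro I I' hI hI'
    constructor
    · intro h x hx; exact ⟨h hx.1, hx.2⟩
    · intro h
      have := polarIn_anti' (Set.Icc (0 : G) u) (polarIn_anti' N h)
      rwa [key3 I hI, key3 I' hI'] at this
  · intro J J' hJ hJ'
    constructor
    · intro h; exact polarIn_anti' _ (polarIn_anti' _ h)
    · intro h
      have : polarIn (Set.Icc (0 : G) u) (polarIn N J) ∩ N ⊆
          polarIn (Set.Icc (0 : G) u) (polarIn N J') ∩ N :=
        fun x hx => ⟨h hx.1, hx.2⟩
      rwa [key4 J hJ, key4 J' hJ'] at this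
end

section
/- Let N be a large subalgebra of the pseudo MV-algebra M = Γ(G,u), and suppose both N and M are strongly projectable. Then for every polar ideal I of M there is a unique Boolean element a ∈ N ∩ I such that I = ↓_M a. -/
variable {G : Type*} [Lattice G] [AddGroup G]
  [CovariantClass G G (· + ·) (· ≤ ·)]
  [CovariantClass G G (Function.swap (· + ·)) (· ≤ ·)]

set_option linter.unusedSectionVars false
set_option linter.unusedVariables false

namespace St16
variable {u : G}

lemma oplus_nonneg (hu0 : 0 ≤ u) {x y : G} (hx : 0 ≤ x) (hy : 0 ≤ y) :
    0 ≤ oplus u x y := le_inf (add_nonneg hx hy) hu0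

lemma oplus_le_u {x y : G} : oplus u x y ≤ u := inf_le_right

lemma oplus_le_add {x y : G} : oplus u x y ≤ x + y := inf_le_left

lemma oplus_mono {x x' y y' : G} (h1 : x ≤ x') (h2 : y ≤ y') :
    oplus u x y ≤ oplus u x' y' := inf_le_inf_right _ (add_le_add h1 h2)

lemma oplus_zero_right {x : G} (hx : x ≤ u) : oplus u x 0 = x := by
  simp [oplus, inf_eq_left.mpr hx]

lemma oplus_zero_left {x : G} (hx : x ≤ u) : oplus u 0 x = x := by
  simp [oplus, inf_eq_left.mpr hx]

lemma oplus_mem_Icc (hu0 : 0 ≤ u) {x y : G} (hx : 0 ≤ x) (hy : 0 ≤ y) :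
    oplus u x y ∈ Set.Icc (0:G) u := ⟨oplus_nonneg hu0 hx hy, oplus_le_u⟩

lemma oplus_left {x y z : G} (hz : 0 ≤ z) :
    oplus u (oplus u x y) z = (x + y + z) ⊓ u := by
  unfold oplus
  rw [inf_add, inf_assoc, inf_eq_right.mpr (le_add_of_nonneg_right hz)]

lemma oplus_right {x y z : G} (hx : 0 ≤ x) :
    oplus u x (oplus u y z) = (x + y + z) ⊓ u := by
  unfold oplus
  rw [add_inf, inf_assoc, inf_eq_right.mpr (le_add_of_nonneg_left hx), ← add_assoc]

lemma inf_add_le {a b c : G} (ha : 0 ≤ a) (hb : 0 ≤ b) (hc : 0 ≤ c) :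
    a ⊓ (b + c) ≤ a ⊓ b + a ⊓ c := by
  rw [add_inf, inf_add, inf_add]
  exact le_inf (le_inf (inf_le_left.trans (le_add_of_nonneg_right ha))
      (inf_le_left.trans (le_add_of_nonneg_left hb)))
    (le_inf (inf_le_left.trans (le_add_of_nonneg_right hc)) inf_le_right)

lemma subadd (hu0 : 0 ≤ u) {A B : G} (hA : 0 ≤ A) (hB : 0 ≤ B) :
    (A + B) ⊓ u ≤ A ⊓ u + B ⊓ u := by
  rw [add_inf, inf_add, inf_add]
  exact le_inf (le_inf inf_le_left (inf_le_right.trans (le_add_of_nonneg_right hB)))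
    (le_inf (inf_le_right.trans (le_add_of_nonneg_left hA))
      (inf_le_right.trans (le_add_of_nonneg_right hu0)))

lemma disj_comm {a b : G} (h : a ⊓ b = 0) : a + b = b + a := by
  have key : ∀ x y : G, x ⊓ y = 0 → y ⊔ x = x + y := by
    intro x y hxy
    calc y ⊔ x = (x + -x + y) ⊔ (x + -y + y) := by
          rw [add_neg_cancel, zero_add, add_assoc, neg_add_cancel, add_zero]
      _ = (x + -x) ⊔ (x + -y) + y := by rw [sup_add]
      _ = x + (-x ⊔ -y) + y := by rw [add_sup]
      _ = x + -(x ⊓ y) + y := by rw [neg_inf]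
      _ = x + y := by rw [hxy, neg_zero, add_zero]
  rw [← key a b h, ← key b a (by rw [inf_comm]; exact h), sup_comm]

lemma inf_formula (hu0 : 0 ≤ u) {x y : G} (hx0 : 0 ≤ x) (hy0 : 0 ≤ y) :
    u - oplus u (-(oplus u (u - x) y) + u) (-x + u) = x ⊓ y := by
  set t := oplus u (u - x) y with ht
  have e1 : -u + ((u - x) + y) = -x + y := by
    rw [sub_eq_add_neg, add_assoc, neg_add_cancel_left]
  have h0 : -u + t = (-x + y) ⊓ 0 := by
    rw [ht]; unfold oplus
    rw [add_inf, e1, neg_add_cancel]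
  have h1 : x + (-u + t) = y ⊓ x := by
    rw [h0, add_inf, add_neg_cancel_left, add_zero]
  have h2 : u - oplus u (-t + u) (-x + u) = (x + (-u + t)) ⊔ 0 := by
    unfold oplus
    rw [sub_eq_add_neg, neg_inf, add_sup, add_neg_cancel]
    congr 1
    simp only [neg_add_rev, neg_neg]
    rw [← add_assoc, ← add_assoc, add_neg_cancel_left, add_assoc]
  rw [h2, h1, sup_eq_left.mpr (le_inf hy0 hx0), inf_comm]

lemma neg_add_formula {p z : G} (hpz : p ≤ z) :
    -(oplus u (u - z) p) + u = -p + z := by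
  have h0 : (0:G) ≤ -p + z := by
    rw [← neg_add_cancel p]
    exact add_le_add_right hpz _
  have e : -((u - z) + p) + u = -p + z := by
    rw [sub_eq_add_neg, neg_add_rev, neg_add_rev, neg_neg, add_assoc, add_assoc,
      neg_add_cancel, add_zero]
  unfold oplus
  rw [neg_inf, sup_add, e, neg_add_cancel, sup_eq_left.mpr h0]

lemma nOplus_nonneg (hu0 : 0 ≤ u) {z : G} (hz : 0 ≤ z) :
    ∀ n, 0 ≤ nOplus u n z
  | 0 => le_refl 0
  | n + 1 => oplus_nonneg hu0 (nOplus_nonneg hu0 hz n) hz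

lemma nOplus_mono {z z' : G} (h : z ≤ z') : ∀ n, nOplus u n z ≤ nOplus u n z'
  | 0 => le_refl 0
  | n + 1 => oplus_mono (nOplus_mono h n) h

lemma disj_nOplus (hu0 : 0 ≤ u) {b z : G} (hb : 0 ≤ b) (hz : 0 ≤ z)
    (h : b ⊓ z = 0) : ∀ n, b ⊓ nOplus u n z = 0
  | 0 => by simp [nOplus, inf_eq_right.mpr hb]
  | n + 1 => by
      refine le_antisymm ?_ (le_inf hb (nOplus_nonneg hu0 hz _))
      calc b ⊓ nOplus u (n+1) z ≤ b ⊓ (nOplus u n z + z) :=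
            inf_le_inf_left _ inf_le_left
        _ ≤ b ⊓ nOplus u n z + b ⊓ z := inf_add_le hb (nOplus_nonneg hu0 hz n) hz
        _ = 0 := by rw [disj_nOplus hu0 hb hz h n, h, add_zero]

/-! ### Subalgebra facts -/

lemma Icc_subalg (hu0 : 0 ≤ u) : IsSubalg u (Set.Icc (0:G) u) := by
  refine ⟨le_refl _, ⟨le_refl 0, hu0⟩, ⟨hu0, le_refl u⟩, ?_, ?_, ?_⟩
  · intro x hx y hy
    exact oplus_mem_Icc hu0 hx.1 hy.1
  · intro x hx
    exact ⟨sub_nonneg.mpr hx.2, sub_le_self u hx.1⟩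
  · intro x hx
    constructor
    · rw [← neg_add_cancel x]; exact add_le_add_right hx.2 _
    · calc -x + u ≤ 0 + u := add_le_add_left (neg_nonpos.mpr hx.1) u
        _ = u := zero_add u

lemma subalg_u_pos {C : Set G} (hC : IsSubalg u C) : (0:G) ≤ u :=
  (hC.1 hC.2.2.1).1

lemma subalg_inf {C : Set G} (hC : IsSubalg u C) :
    ∀ x ∈ C, ∀ y ∈ C, x ⊓ y ∈ C := by
  intro x hx y hy
  have hu0 := subalg_u_pos hC
  rw [← inf_formula hu0 (hC.1 hx).1 (hC.1 hy).1]
  have h1 : oplus u (u - x) y ∈ C := hC.2.2.2.1 _ (hC.2.2.2.2.1 x hx) y hy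
  have h2 : -(oplus u (u - x) y) + u ∈ C := hC.2.2.2.2.2 _ h1
  have h3 : -x + u ∈ C := hC.2.2.2.2.2 x hx
  exact hC.2.2.2.2.1 _ (hC.2.2.2.1 _ h2 _ h3)

lemma subalg_neg_add_mem {C : Set G} (hC : IsSubalg u C) {p z : G}
    (hp : p ∈ C) (hz : z ∈ C) (hpz : p ≤ z) : -p + z ∈ C := by
  rw [← neg_add_formula hpz]
  exact hC.2.2.2.2.2 _ (hC.2.2.2.1 _ (hC.2.2.2.2.1 z hz) p hp)

lemma ideal_zero {C I : Set G} (hC : IsSubalg u C) (hI : IsIdealIn u C I) :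
    (0:G) ∈ I := by
  obtain ⟨x0, hx0⟩ := hI.2.1
  exact hI.2.2.1 x0 hx0 0 hC.2.1 (hC.1 (hI.1 hx0)).1

lemma nOplus_mem_ideal {C I : Set G} (hC : IsSubalg u C) (hI : IsIdealIn u C I)
    {z : G} (hz : z ∈ I) : ∀ n, nOplus u n z ∈ I
  | 0 => ideal_zero hC hI
  | n + 1 => hI.2.2.2 _ (nOplus_mem_ideal hC hI hz n) _ hz

/-- Riesz-type decomposition inside a carrier. -/
lemma riesz {C I : Set G} (hC : IsSubalg u C) (hI : IsIdealIn u C I)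
    {i j z : G} (hi : i ∈ I) (hzC : z ∈ C) (hzij : z ≤ i + j) (hj0 : 0 ≤ j) :
    ∃ p ∈ I, p ≤ i ∧ ∃ q ∈ C, 0 ≤ q ∧ q ≤ j ∧ q ≤ z ∧ p + q = z := by
  have hzicc := hC.1 hzC
  have hiicc := hC.1 (hI.1 hi)
  have hpC : z ⊓ i ∈ C := subalg_inf hC z hzC i (hI.1 hi)
  have hpI : z ⊓ i ∈ I := hI.2.2.1 i hi _ hpC inf_le_right
  have hp0 : 0 ≤ z ⊓ i := le_inf hzicc.1 hiicc.1
  have hpz : z ⊓ i ≤ z := inf_le_left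
  refine ⟨z ⊓ i, hpI, inf_le_right, -(z ⊓ i) + z,
    subalg_neg_add_mem hC hpC hzC hpz, ?_, ?_, ?_, add_neg_cancel_left _ _⟩
  · rw [← neg_add_cancel (z ⊓ i)]
    exact add_le_add_right hpz _
  · have : -(z ⊓ i) + z = 0 ⊔ (-i + z) := by
      rw [neg_inf, sup_add, neg_add_cancel]
    rw [this]
    refine sup_le hj0 ?_
    calc -i + z ≤ -i + (i + j) := add_le_add_right hzij _
      _ = j := neg_add_cancel_left _ _
  · calc -(z ⊓ i) + z ≤ 0 + z := add_le_add_left (neg_nonpos.mpr hp0) z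
      _ = z := zero_add z

/-- Main structural lemma: a summand-ideal of a subalgebra carrier is generated
by a maximum element `a` with `a ⊓ (-a + u) = 0`. -/
lemma summand_principal {C I : Set G} (hC : IsSubalg u C)
    (hsum : IsSummandIdealIn u C I) :
    ∃ a, a ∈ I ∧ (∀ x ∈ I, x ≤ a) ∧ a ⊓ (-a + u) = 0 := by
  have hu0 := subalg_u_pos hC
  obtain ⟨hIn, J, hJn, hIJ, hgen⟩ := hsum
  have hIi := hIn.1
  have hJi := hJn.1
  have h0I : (0:G) ∈ I := ideal_zero hC hIi
  have h0J : (0:G) ∈ J := ideal_zero hC hJi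
  have hIicc : ∀ i ∈ I, i ∈ Set.Icc (0:G) u := fun i hi => hC.1 (hIi.1 hi)
  have hJicc : ∀ j ∈ J, j ∈ Set.Icc (0:G) u := fun j hj => hC.1 (hJi.1 hj)
  -- disjointness of I and J
  have hdisj : ∀ i ∈ I, ∀ j ∈ J, i ⊓ j = 0 := by
    intro i hi j hj
    have h1 : i ⊓ j ∈ C := subalg_inf hC i (hIi.1 hi) j (hJi.1 hj)
    have h2 : i ⊓ j ∈ I := hIi.2.2.1 i hi _ h1 inf_le_left
    have h3 : i ⊓ j ∈ J := hJi.2.2.1 j hj _ h1 inf_le_right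
    have : i ⊓ j ∈ I ∩ J := ⟨h2, h3⟩
    rw [hIJ] at this
    exact this
  -- D = I ⊕ J
  set D := setOplus u I J with hD
  have hmemD : ∀ i ∈ I, ∀ j ∈ J, oplus u i j ∈ D := by
    intro i hi j hj
    exact ⟨i, hi, j, hj, rfl⟩
  have hDC : D ⊆ C := by
    rintro d ⟨i, hi, j, hj, rfl⟩
    exact hC.2.2.2.1 i (hIi.1 hi) j (hJi.1 hj)
  have hDdown : ∀ d ∈ D, ∀ z ∈ C, z ≤ d → z ∈ D := by
    rintro d ⟨i, hi, j, hj, rfl⟩ z hzC hzd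
    have hzij : z ≤ i + j := hzd.trans oplus_le_add
    obtain ⟨p, hpI, hpi, q, hqC, hq0, hqj, hqz, hpq⟩ :=
      riesz hC hIi hi hzC hzij (hJicc j hj).1
    have hqJ : q ∈ J := hJi.2.2.1 j hj q hqC hqj
    have : oplus u p q = z := by
      rw [oplus, hpq, inf_eq_left.mpr (hC.1 hzC).2]
    rw [← this]
    exact hmemD p hpI q hqJ
  have hDoplus : ∀ d1 ∈ D, ∀ d2 ∈ D, oplus u d1 d2 ∈ D := by
    rintro d1 ⟨i1, hi1, j1, hj1, rfl⟩ d2 ⟨i2, hi2, j2, hj2, rfl⟩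
    have hcomm : j1 + i2 = i2 + j1 :=
      disj_comm (by rw [inf_comm]; exact hdisj i2 hi2 j1 hj1)
    have hle : oplus u (oplus u i1 j1) (oplus u i2 j2) ≤
        oplus u (oplus u i1 i2) (oplus u j1 j2) := by
      refine le_inf ?_ oplus_le_u
      calc oplus u (oplus u i1 j1) (oplus u i2 j2)
          ≤ (i1 + j1 + (i2 + j2)) ⊓ u :=
            le_inf (oplus_le_add.trans (add_le_add oplus_le_add oplus_le_add))
              oplus_le_u
        _ = (i1 + i2 + (j1 + j2)) ⊓ u := by
            rw [add_assoc i1 j1, ← add_assoc j1, hcomm, add_assoc i2,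
              ← add_assoc i1, ← add_assoc, add_assoc i1 i2]
        _ ≤ (i1 + i2) ⊓ u + (j1 + j2) ⊓ u :=
            subadd hu0 (add_nonneg (hIicc i1 hi1).1 (hIicc i2 hi2).1)
              (add_nonneg (hJicc j1 hj1).1 (hJicc j2 hj2).1)
    have hmC : oplus u (oplus u i1 j1) (oplus u i2 j2) ∈ C :=
      hC.2.2.2.1 _ (hDC (hmemD i1 hi1 j1 hj1)) _ (hDC (hmemD i2 hi2 j2 hj2))
    exact hDdown _ (hmemD _ (hIi.2.2.2 i1 hi1 i2 hi2) _ (hJi.2.2.2 j1 hj1 j2 hj2))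
      _ hmC hle
  have hDnormal : IsNormalIdealIn u C D := by
    refine ⟨⟨hDC, ⟨0, ?_⟩, hDdown, hDoplus⟩, ?_⟩
    · have : oplus u 0 0 = 0 := oplus_zero_left hu0
      rw [← this]; exact hmemD 0 h0I 0 h0J
    · intro x hxC
      have hx0 : 0 ≤ x := (hC.1 hxC).1
      have swapI : ∀ i ∈ I, ∃ i' ∈ I, oplus u x i = oplus u i' x := by
        intro i hi
        have : oplus u x i ∈ (fun i => oplus u x i) '' I := ⟨i, hi, rfl⟩
        rw [hIn.2 x hxC] at this
        obtain ⟨i', hi', h⟩ := this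
        exact ⟨i', hi', h.symm⟩
      have swapI' : ∀ i ∈ I, ∃ i' ∈ I, oplus u i x = oplus u x i' := by
        intro i hi
        have : oplus u i x ∈ (fun i => oplus u i x) '' I := ⟨i, hi, rfl⟩
        rw [← hIn.2 x hxC] at this
        obtain ⟨i', hi', h⟩ := this
        exact ⟨i', hi', h.symm⟩
      have swapJ : ∀ j ∈ J, ∃ j' ∈ J, oplus u x j = oplus u j' x := by
        intro j hj
        have : oplus u x j ∈ (fun i => oplus u x i) '' J := ⟨j, hj, rfl⟩
        rw [hJn.2 x hxC] at this
        obtain ⟨j', hj', h⟩ := this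
        exact ⟨j', hj', h.symm⟩
      have swapJ' : ∀ j ∈ J, ∃ j' ∈ J, oplus u j x = oplus u x j' := by
        intro j hj
        have : oplus u j x ∈ (fun i => oplus u i x) '' J := ⟨j, hj, rfl⟩
        rw [← hJn.2 x hxC] at this
        obtain ⟨j', hj', h⟩ := this
        exact ⟨j', hj', h.symm⟩
      apply Set.eq_of_subset_of_subset
      · rintro w ⟨d, ⟨i, hi, j, hj, rfl⟩, rfl⟩
        obtain ⟨i', hi', hxi⟩ := swapI i hi
        obtain ⟨j', hj', hxj⟩ := swapJ j hj
        have key : oplus u x (oplus u i j) = oplus u (oplus u i' j') x := by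
          have hi'0 := (hIicc i' hi').1
          have hj0 := (hJicc j hj).1
          have hj'0 := (hJicc j' hj').1
          calc oplus u x (oplus u i j) = (x + i + j) ⊓ u := oplus_right hx0
            _ = oplus u (oplus u x i) j := (oplus_left hj0).symm
            _ = oplus u (oplus u i' x) j := by rw [hxi]
            _ = (i' + x + j) ⊓ u := oplus_left hj0
            _ = oplus u i' (oplus u x j) := by
                rw [oplus_right hi'0, add_assoc]
            _ = oplus u i' (oplus u j' x) := by rw [hxj]
            _ = (i' + j' + x) ⊓ u := by rw [oplus_right hi'0, add_assoc]
            _ = oplus u (oplus u i' j') x := (oplus_left hx0).symm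
        exact ⟨oplus u i' j', hmemD i' hi' j' hj', key.symm⟩
      · rintro w ⟨d, ⟨i, hi, j, hj, rfl⟩, rfl⟩
        obtain ⟨j', hj', hxj⟩ := swapJ' j hj
        obtain ⟨i', hi', hxi⟩ := swapI' i hi
        have key : oplus u (oplus u i j) x = oplus u x (oplus u i' j') := by
          have hi0 := (hIicc i hi).1
          have hi'0 := (hIicc i' hi').1
          have hj'0 := (hJicc j' hj').1
          calc oplus u (oplus u i j) x = (i + j + x) ⊓ u := oplus_left hx0
            _ = oplus u i (oplus u j x) := by rw [oplus_right hi0, add_assoc]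
            _ = oplus u i (oplus u x j') := by rw [hxj]
            _ = (i + x + j') ⊓ u := by rw [oplus_right hi0, add_assoc]
            _ = oplus u (oplus u i x) j' := (oplus_left hj'0).symm
            _ = oplus u (oplus u x i') j' := by rw [hxi]
            _ = (x + i' + j') ⊓ u := oplus_left hj'0
            _ = oplus u x (oplus u i' j') := (oplus_right hx0).symm
        exact ⟨oplus u i' j', hmemD i' hi' j' hj', key.symm⟩
  have hIJD : I ∪ J ⊆ D := by
    rintro w (hw | hw)
    · have : oplus u w 0 = w := oplus_zero_right (hIicc w hw).2
      rw [← this]; exact hmemD w hw 0 h0J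
    · have : oplus u 0 w = w := oplus_zero_left (hJicc w hw).2
      rw [← this]; exact hmemD 0 h0I w hw
  -- u belongs to D
  have huD : u ∈ D := by
    have h1 : u ∈ normalGenIn u C (I ∪ J) := by rw [hgen]; exact hC.2.2.1
    exact h1 D ⟨hDnormal, hIJD⟩
  obtain ⟨i0, hi0, j0, hj0, hu_eq⟩ := huD
  have huij : u ≤ i0 + j0 := by
    conv_lhs => rw [← hu_eq]
    exact oplus_le_add
  refine ⟨i0, hi0, ?_, ?_⟩
  · -- maximality
    intro x hx
    have hxC := hIi.1 hx
    have hxicc := hC.1 hxC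
    obtain ⟨p, hpI, hpi, q, hqC, hq0, hqj, hqx, hpq⟩ :=
      riesz hC hIi hi0 hxC (hxicc.2.trans huij) (hJicc j0 hj0).1
    have hqI : q ∈ I := hIi.2.2.1 x hx q hqC hqx
    have hqJ : q ∈ J := hJi.2.2.1 j0 hj0 q hqC hqj
    have : q ∈ I ∩ J := ⟨hqI, hqJ⟩
    rw [hIJ] at this
    rw [← hpq, this, add_zero]
    exact hpi
  · -- i0 ⊓ (-i0 + u) = 0
    have h1 : -i0 + u ≤ j0 := by
      calc -i0 + u ≤ -i0 + (i0 + j0) := add_le_add_right huij _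
        _ = j0 := neg_add_cancel_left _ _
    have h2 : i0 ⊓ (-i0 + u) ≤ i0 ⊓ j0 := inf_le_inf_left _ h1
    rw [hdisj i0 hi0 j0 hj0] at h2
    refine le_antisymm h2 (le_inf (hIicc i0 hi0).1 ?_)
    rw [← neg_add_cancel i0]
    exact add_le_add_right (hIicc i0 hi0).2 _

end St16

namespace St16
variable {u : G}

lemma polar_sub {C X : Set G} : polarIn C X ⊆ C := fun _ hy => hy.1

lemma polar_anti {C X Y : Set G} (h : X ⊆ Y) : polarIn C Y ⊆ polarIn C X :=
  fun y hy => ⟨hy.1, fun x hx => hy.2 x (h hx)⟩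

lemma sub_double_polar {C X : Set G} (hX : X ⊆ C) :
    X ⊆ polarIn C (polarIn C X) :=
  fun x hx => ⟨hX hx, fun y hy => by rw [inf_comm]; exact hy.2 x hx⟩

lemma triple_polar {C X : Set G} (hX : X ⊆ C) :
    polarIn C (polarIn C (polarIn C X)) = polarIn C X :=
  Set.eq_of_subset_of_subset (polar_anti (sub_double_polar hX))
    (sub_double_polar polar_sub)

end St16

theorem stmt16 (u : G) (hu : IsStrongUnit u) (N : Set G)
    (hN : IsLargeSubalg u N)
    (hNsp : IsStronglyProjectableIn u N)
    (hMsp : IsStronglyProjectableIn u (Set.Icc (0 : G) u))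
    (I : Set G) (hI : IsPolarIdealIn (Set.Icc (0 : G) u) I) :
    ∃! a : G, a ∈ N ∩ I ∧ oplus u a a = a ∧ I = dsetIn (Set.Icc (0 : G) u) a := by
  have hu0 := hu.1
  set M := Set.Icc (0:G) u with hM
  have hMC : IsSubalg u M := St16.Icc_subalg hu0
  have hNC : IsSubalg u N := hN.1
  have hNM : N ⊆ M := hN.1.1
  obtain ⟨a, haI, hamax, hadisj⟩ := St16.summand_principal hMC (hMsp I hI)
  have hIideal : IsIdealIn u M I := (hMsp I hI).1.1
  have hIM : I ⊆ M := hIideal.1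
  have haM := hIM haI
  set S := I ∩ N with hS
  have hSN : S ⊆ N := Set.inter_subset_right
  set K := polarIn N (polarIn N S) with hK
  have hKpolar : IsPolarIdealIn N K := by
    show polarIn N (polarIn N K) = K
    rw [hK]
    exact St16.triple_polar St16.polar_sub
  obtain ⟨b, hbK, hbmax, hbdisj⟩ := St16.summand_principal hNC (hNsp K hKpolar)
  have hKN : K ⊆ N := St16.polar_sub
  have hSK : S ⊆ K := St16.sub_double_polar hSN
  -- K ⊆ I
  have hKI : K ⊆ I := by
    intro x hx
    have hxN : x ∈ N := hKN hx
    have hxM : x ∈ M := hNM hxN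
    have hmem : x ∈ polarIn M (polarIn M I) := by
      refine ⟨hxM, fun y hy => ?_⟩
      by_contra hz
      have hyM : y ∈ M := hy.1
      have hz0 : 0 ≤ x ⊓ y := le_inf hxM.1 hyM.1
      have hzM : x ⊓ y ∈ M := ⟨hz0, inf_le_left.trans hxM.2⟩
      obtain ⟨n, w, hwN, hwne, hwle⟩ := hN.2 _ hzM hz
      have hwM := hNM hwN
      have hwP : w ∈ polarIn N S := by
        refine ⟨hwN, fun i hi => ?_⟩
        have hiM : i ∈ M := hIM hi.1
        have hzi : (x ⊓ y) ⊓ i = 0 := by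
          refine le_antisymm ?_ (le_inf hz0 hiM.1)
          calc (x ⊓ y) ⊓ i ≤ y ⊓ i := inf_le_inf_right _ inf_le_right
            _ = 0 := hy.2 i hi.1
        have hkey : i ⊓ nOplus u n (x ⊓ y) = 0 :=
          St16.disj_nOplus hu0 hiM.1 hz0 (by rw [inf_comm]; exact hzi) n
        refine le_antisymm ?_ (le_inf hwM.1 hiM.1)
        calc w ⊓ i ≤ nOplus u n (x ⊓ y) ⊓ i := inf_le_inf_right _ hwle
          _ = 0 := by rw [inf_comm]; exact hkey
      have hxw : x ⊓ w = 0 := hx.2 w hwP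
      have hwn : w ⊓ nOplus u n x = 0 :=
        St16.disj_nOplus hu0 hwM.1 hxM.1 (by rw [inf_comm]; exact hxw) n
      have hwle' : w ≤ nOplus u n x := hwle.trans (St16.nOplus_mono inf_le_left n)
      exact hwne ((inf_eq_left.mpr hwle').symm.trans hwn)
    rw [hI] at hmem
    exact hmem
  have hbI : b ∈ I := hKI hbK
  have hba : b ≤ a := hamax b hbI
  have hbN : b ∈ N := hKN hbK
  have hbM : b ∈ M := hNM hbN
  set b' := -b + u with hb'
  have hb'0 : 0 ≤ b' := by
    rw [hb', ← neg_add_cancel b]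
    exact add_le_add_right hbM.2 _
  have hab' : a ⊓ b' = 0 := by
    by_contra hz
    have hz0 : 0 ≤ a ⊓ b' := le_inf haM.1 hb'0
    have hzM : a ⊓ b' ∈ M := ⟨hz0, inf_le_left.trans haM.2⟩
    obtain ⟨n, w, hwN, hwne, hwle⟩ := hN.2 _ hzM hz
    have hwM := hNM hwN
    have hzI : a ⊓ b' ∈ I := hIideal.2.2.1 a haI _ hzM inf_le_left
    have hnI : nOplus u n (a ⊓ b') ∈ I := St16.nOplus_mem_ideal hMC hIideal hzI n
    have hwI : w ∈ I := hIideal.2.2.1 _ hnI w hwM hwle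
    have hwK : w ∈ K := hSK ⟨hwI, hwN⟩
    have hwb : w ≤ b := hbmax w hwK
    have hwb' : w ≤ nOplus u n b' := hwle.trans (St16.nOplus_mono inf_le_right n)
    have hbn : b ⊓ nOplus u n b' = 0 := St16.disj_nOplus hu0 hbM.1 hb'0 hbdisj n
    exact hwne (le_antisymm (by rw [← hbn]; exact le_inf hwb hwb') hwM.1)
  have hab : a ≤ b := by
    have h1 : a = a ⊓ (b + b') := by
      rw [hb', add_neg_cancel_left]
      exact (inf_eq_left.mpr haM.2).symm
    calc a = a ⊓ (b + b') := h1
      _ ≤ a ⊓ b + a ⊓ b' := St16.inf_add_le haM.1 hbM.1 hb'0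
      _ = a ⊓ b := by rw [hab', add_zero]
      _ ≤ b := inf_le_right
  have habeq : a = b := le_antisymm hab hba
  refine ⟨a, ⟨⟨?_, haI⟩, ?_, ?_⟩, ?_⟩
  · rw [habeq]; exact hbN
  · refine le_antisymm (hamax _ (hIideal.2.2.2 a haI a haI)) ?_
    conv_lhs => rw [← St16.oplus_zero_right haM.2]
    exact St16.oplus_mono (le_refl a) haM.1
  · apply Set.eq_of_subset_of_subset
    · intro x hx
      exact ⟨hIM hx, hamax x hx⟩
    · rintro x ⟨hxM, hxa⟩
      exact hIideal.2.2.1 a haI x hxM hxa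
  · rintro c ⟨⟨hcN, hcI⟩, hcbool, hcset⟩
    have hca : c ≤ a := hamax c hcI
    have hac : a ≤ c := by
      have h2 : a ∈ dsetIn M c := by rw [← hcset]; exact haI
      exact h2.2
    exact le_antisymm hca hac
end
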